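/- If G is a graph, F is a family of graphs, X is a subset of V(G), and Y is a subset of the closed neighbourhood N[X], then the F-isolation number of G is at most |X| plus the F-isolation number of G − Y. -/

import Mathlib

open SimpleGraph

/-- `G` contains a copy of `H` as a (not necessarily induced) subgraph. -/
def containsCopy {W V : Type*} (H : SimpleGraph W) (G : SimpleGraph V) : Prop :=
  ∃ f : W → V, Function.Injective f ∧ ∀ a b, H.Adj a b → G.Adj (f a) (f b)

/-- The closed neighbourhood `N[D]` of a set of vertices `D`. -/
def closedNbhd {V : Type*} (G : SimpleGraph V) (D : Set V) : Set V :=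
  {v | v ∈ D ∨ ∃ d ∈ D, G.Adj d v}

/-- `D` is an `F`-isolating set of `G`: `G - N[D]` contains no copy of a member of the
family `F`. -/
def IsIsolating {V ι : Type*} {W : ι → Type*} (G : SimpleGraph V)
    (F : ∀ i, SimpleGraph (W i)) (D : Set V) : Prop :=
  ∀ i, ¬ containsCopy (F i) (G.induce (closedNbhd G D)ᶜ)

/-- The `F`-isolation number `ι(G, F)`. -/
noncomputable def iotaF {V ι : Type*} {W : ι → Type*} (G : SimpleGraph V)
    (F : ∀ i, SimpleGraph (W i)) : ℕ :=
  sInf {n | ∃ D : Finset V, D.card = n ∧ IsIsolating G F ↑D}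

/-- If `X ⊆ V(G)` and `Y ⊆ N[X]`, then `ι(G, F) ≤ |X| + ι(G − Y, F)`. -/
theorem stmt0 {V : Type*} [Fintype V] (G : SimpleGraph V) {ι : Type*} {W : ι → Type*}
    (F : ∀ i, SimpleGraph (W i)) (X : Finset V) (Y : Set V)
    (hY : Y ⊆ closedNbhd G ↑X) :
    iotaF G F ≤ X.card + iotaF (G.induce Yᶜ) F := by
  classical
  by_cases hE : ∃ i, IsEmpty (W i)
  · obtain ⟨i, hi⟩ := hE
    have hS : {n | ∃ D : Finset V, D.card = n ∧ IsIsolating G F ↑D} = ∅ := by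
      ext n
      simp only [Set.mem_setOf_eq, Set.mem_empty_iff_false, iff_false, not_exists]
      rintro D ⟨-, hD⟩
      exact hD i ⟨isEmptyElim, fun a => isEmptyElim a, fun a => isEmptyElim a⟩
    rw [iotaF, hS, Nat.sInf_empty]
    exact Nat.zero_le _
  · push_neg at hE
    haveI : Fintype ↥Yᶜ := Fintype.ofFinite _
    have hne : (({n | ∃ D : Finset ↥Yᶜ, D.card = n ∧ IsIsolating (G.induce Yᶜ) F ↑D}) : Set ℕ).Nonempty := by
      refine ⟨(Finset.univ : Finset ↥Yᶜ).card, Finset.univ, rfl, ?_⟩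
      rintro i ⟨f, hinj, hadj⟩
      obtain ⟨a⟩ := hE i
      exact (f a).2 (Or.inl (by simp))
    obtain ⟨D', hcard, hiso⟩ := Nat.sInf_mem hne
    set D : Finset V := X ∪ D'.image Subtype.val with hD
    have hDiso : IsIsolating G F ↑D := by
      rintro i ⟨f, hinj, hadj⟩
      have hYsub : ∀ v : ↥((closedNbhd G ↑D)ᶜ), (v : V) ∈ Yᶜ := by
        rintro ⟨v, hv⟩ hvY
        apply hv
        rcases hY hvY with h | ⟨d, hdX, hdv⟩
        · exact Or.inl (by simp [hD, h])
        · exact Or.inr ⟨d, by simp [hD, hdX], hdv⟩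
      have hnot : ∀ v : ↥((closedNbhd G ↑D)ᶜ),
          (⟨(v : V), hYsub v⟩ : ↥Yᶜ) ∈ (closedNbhd (G.induce Yᶜ) ↑D')ᶜ := by
        rintro ⟨v, hv⟩ hmem
        apply hv
        rcases hmem with h | ⟨d, hdD, hdv⟩
        · left
          have h' : (⟨v, hYsub ⟨v, hv⟩⟩ : ↥Yᶜ) ∈ D' := h
          simp only [hD, Finset.coe_union, Set.mem_union, Finset.coe_image, Set.mem_image,
            Finset.mem_coe]
          exact Or.inr ⟨_, h', rfl⟩
        · right
          refine ⟨(d : V), ?_, hdv⟩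
          have h' : d ∈ D' := hdD
          simp only [hD, Finset.coe_union, Set.mem_union, Finset.coe_image, Set.mem_image,
            Finset.mem_coe]
          exact Or.inr ⟨_, h', rfl⟩
      refine hiso i ⟨fun a => ⟨⟨((f a : ↥((closedNbhd G ↑D)ᶜ)) : V), hYsub (f a)⟩, hnot (f a)⟩,
        ?_, ?_⟩
      · intro a b hab
        apply hinj
        apply Subtype.ext
        exact congrArg (fun x => ((x : ↥Yᶜ) : V)) (congrArg Subtype.val hab)
      · intro a b hab
        exact hadj a b hab
    refine le_trans (Nat.sInf_le ⟨D, rfl, hDiso⟩) ?_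
    calc D.card ≤ X.card + (D'.image Subtype.val).card := Finset.card_union_le _ _
      _ ≤ X.card + D'.card := by gcongr; exact Finset.card_image_le
      _ = X.card + iotaF (G.induce Yᶜ) F := by
          rw [hcard]
          rfl
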